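/- arXiv:2502.03786 — 2 statements merged into one kernel-verified Lean document; each statement's English description precedes it below -/
import Mathlib

section
/- For the Hénon–Heiles system with potential V(q₁,q₂)=q₁(a q₂²+b q₁²), the vector field Y=2HX is bi-Hamiltonian: for every i=1,…,4 one has Σ_j P̃^{ij} ∂H/∂x^j = 2H·X^i and also Σ_j P^{ij} ∂(H²)/∂x^j = 2H·X^i, where P is the canonical Poisson bivector; equivalently P̃ dH = P d(H²) = 2H X on all of ℝ⁴. -/
open Real

noncomputable section

/-- Partial derivative of `F` in the `k`-th coordinate direction at `x`. -/
def pd (F : (Fin 4 → ℝ) → ℝ) (k : Fin 4) (x : Fin 4 → ℝ) : ℝ :=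
  fderiv ℝ F x (Pi.single k 1)

/-- The canonical Poisson bivector on ℝ⁴. -/
def Pcan : Matrix (Fin 4) (Fin 4) ℝ :=
  !![0, 0, 1, 0; 0, 0, 0, 1; -1, 0, 0, 0; 0, -1, 0, 0]

/-- Lie derivative of a bivector field `T` along a vector field `Xf`:
`(L_X T)^{ij} = Σ_k ( X^k ∂T^{ij}/∂x^k − T^{kj} ∂X^i/∂x^k − T^{ik} ∂X^j/∂x^k )`. -/
def lieDerivBiv (Xf : (Fin 4 → ℝ) → Fin 4 → ℝ)
    (T : (Fin 4 → ℝ) → Matrix (Fin 4) (Fin 4) ℝ)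
    (i j : Fin 4) (x : Fin 4 → ℝ) : ℝ :=
  ∑ k, (Xf x k * pd (fun y => T y i j) k x
      - T x k j * pd (fun y => Xf y i) k x
      - T x i k * pd (fun y => Xf y j) k x)

/-- Lie derivative of a 2-form `ω` along a vector field `Xf`:
`(L_X ω)_{ij} = Σ_k ( X^k ∂ω_{ij}/∂x^k + ω_{kj} ∂X^k/∂x^i + ω_{ik} ∂X^k/∂x^j )`. -/
def lieDerivForm (Xf : (Fin 4 → ℝ) → Fin 4 → ℝ)
    (ω : (Fin 4 → ℝ) → Matrix (Fin 4) (Fin 4) ℝ)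
    (i j : Fin 4) (x : Fin 4 → ℝ) : ℝ :=
  ∑ k, (Xf x k * pd (fun y => ω y i j) k x
      + ω x k j * pd (fun y => Xf y k) i x
      + ω x i k * pd (fun y => Xf y k) j x)

/-- The Jacobiator of a bivector field `A`; `A` satisfies the Jacobi identity iff it
vanishes for all indices `i j k`. -/
def jac (A : (Fin 4 → ℝ) → Matrix (Fin 4) (Fin 4) ℝ)
    (i j k : Fin 4) (x : Fin 4 → ℝ) : ℝ :=
  ∑ l, (A x l i * pd (fun y => A y j k) l x
      + A x l j * pd (fun y => A y k i) l x
      + A x l k * pd (fun y => A y i j) l x)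

/-- The mixed Schouten bracket expression of two bivector fields `A` and `B`. -/
def mixedSchouten (A B : (Fin 4 → ℝ) → Matrix (Fin 4) (Fin 4) ℝ)
    (i j k : Fin 4) (x : Fin 4 → ℝ) : ℝ :=
  ∑ l, (A x l i * pd (fun y => B y j k) l x
      + A x l j * pd (fun y => B y k i) l x
      + A x l k * pd (fun y => B y i j) l x
      + B x l i * pd (fun y => A y j k) l x
      + B x l j * pd (fun y => A y k i) l x
      + B x l k * pd (fun y => A y i j) l x)

/-- Hénon–Heiles potential `V = q₁ (a q₂² + b q₁²)`. -/
def VHH (a b : ℝ) (x : Fin 4 → ℝ) : ℝ := x 0 * (a * (x 1) ^ 2 + b * (x 0) ^ 2)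

/-- Hénon–Heiles Hamiltonian. -/
def HHH (a b : ℝ) (x : Fin 4 → ℝ) : ℝ := ((x 2) ^ 2 + (x 3) ^ 2) / 2 + VHH a b x

/-- Hénon–Heiles Hamiltonian vector field `X = (p₁, p₂, −∂V/∂q₁, −∂V/∂q₂)`. -/
def XHH (a b : ℝ) (x : Fin 4 → ℝ) : Fin 4 → ℝ :=
  ![x 2, x 3, -(pd (VHH a b) 0 x), -(pd (VHH a b) 1 x)]

/-- The invariant bivector `P̃` of the Hénon–Heiles system. -/
def PtHH (a b : ℝ) (x : Fin 4 → ℝ) : Matrix (Fin 4) (Fin 4) ℝ :=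
  let q1 := x 0; let q2 := x 1; let p1 := x 2; let p2 := x 3
  let e12 := (4 / 3) * (q2 * p1 - q1 * p2)
  let e13 := p1 ^ 2 - p2 ^ 2 - (2 / 3) * a * q1 * q2 ^ 2 + 2 * b * q1 ^ 3
  let e14 := 2 * p1 * p2 + (8 / 3) * a * q1 ^ 2 * q2
  let e23 := 2 * p1 * p2 + (4 / 3) * a * q2 ^ 3 + 4 * b * q1 ^ 2 * q2
  let e24 := p2 ^ 2 - p1 ^ 2 + (2 / 3) * a * q1 * q2 ^ 2 - 2 * b * q1 ^ 3
  let e34 := 4 * a * q1 * q2 * p1 - (2 * a * q2 ^ 2 + 6 * b * q1 ^ 2) * p2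
  !![0, e12, e13, e14;
     -(e12), 0, e23, e24;
     -(e13), -(e23), 0, e34;
     -(e14), -(e24), -(e34), 0]

/-- The invariant 2-form `ω̃` of the Hénon–Heiles system. -/
def OmHH (a b : ℝ) (x : Fin 4 → ℝ) : Matrix (Fin 4) (Fin 4) ℝ :=
  let q1 := x 0; let q2 := x 1; let p1 := x 2; let p2 := x 3
  let w12 := ((a * q2 ^ 2 + 3 * b * q1 ^ 2) / 2) * p2 - a * q1 * q2 * p1
  let w13 := a * q1 * q2 ^ 2 / 6 - b * q1 ^ 3 / 2 - (p1 ^ 2 - p2 ^ 2) / 4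
  let w14 := -(a * q2 ^ 3 / 3 + b * q1 ^ 2 * q2 + p1 * p2 / 2)
  let w23 := -(2 * a * q1 ^ 2 * q2 / 3 + p1 * p2 / 2)
  let w24 := -(a * q1 * q2 ^ 2) / 6 + b * q1 ^ 3 / 2 + (p1 ^ 2 - p2 ^ 2) / 4
  let w34 := (q1 * p2 - q2 * p1) / 3
  !![0, w12, w13, w14;
     -(w12), 0, w23, w24;
     -(w13), -(w23), 0, w34;
     -(w14), -(w24), -(w34), 0]

lemma hasFDerivAt_VHH (a b : ℝ) (x : Fin 4 → ℝ) :
    HasFDerivAt (VHH a b)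
      (x 0 • (a • (x 1 • (ContinuousLinearMap.proj 1 : (Fin 4 → ℝ) →L[ℝ] ℝ) +
          x 1 • ContinuousLinearMap.proj 1) +
        b • (x 0 • (ContinuousLinearMap.proj 0 : (Fin 4 → ℝ) →L[ℝ] ℝ) +
          x 0 • ContinuousLinearMap.proj 0)) +
        (a * (x 1 * x 1) + b * (x 0 * x 0)) • ContinuousLinearMap.proj (0 : Fin 4)) x := by
  have h0 := hasFDerivAt_apply (𝕜 := ℝ) (0 : Fin 4) x
  have h1 := hasFDerivAt_apply (𝕜 := ℝ) (1 : Fin 4) x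
  have h := h0.mul (((h1.mul h1).const_mul a).add ((h0.mul h0).const_mul b))
  have hfun : VHH a b = fun y : Fin 4 → ℝ => y 0 * (a * (y 1 * y 1) + b * (y 0 * y 0)) := by
    funext y; unfold VHH; ring
  rw [hfun]
  exact h

lemma pd_VHH0 (a b : ℝ) (x : Fin 4 → ℝ) :
    pd (VHH a b) 0 x = a * (x 1) ^ 2 + 3 * b * (x 0) ^ 2 := by
  rw [pd, (hasFDerivAt_VHH a b x).fderiv]
  simp [Pi.single_apply]; ring

lemma pd_VHH1 (a b : ℝ) (x : Fin 4 → ℝ) :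
    pd (VHH a b) 1 x = 2 * a * (x 0) * (x 1) := by
  rw [pd, (hasFDerivAt_VHH a b x).fderiv]
  simp [Pi.single_apply]; ring

lemma hasFDerivAt_HHH (a b : ℝ) (x : Fin 4 → ℝ) :
    HasFDerivAt (HHH a b)
      ((2:ℝ)⁻¹ • ((x 2 • (ContinuousLinearMap.proj 2 : (Fin 4 → ℝ) →L[ℝ] ℝ) +
          x 2 • ContinuousLinearMap.proj 2) +
        (x 3 • (ContinuousLinearMap.proj 3 : (Fin 4 → ℝ) →L[ℝ] ℝ) +
          x 3 • ContinuousLinearMap.proj 3)) +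
        (x 0 • (a • (x 1 • (ContinuousLinearMap.proj 1 : (Fin 4 → ℝ) →L[ℝ] ℝ) +
          x 1 • ContinuousLinearMap.proj 1) +
        b • (x 0 • (ContinuousLinearMap.proj 0 : (Fin 4 → ℝ) →L[ℝ] ℝ) +
          x 0 • ContinuousLinearMap.proj 0)) +
        (a * (x 1 * x 1) + b * (x 0 * x 0)) • ContinuousLinearMap.proj (0 : Fin 4))) x := by
  have h2 := hasFDerivAt_apply (𝕜 := ℝ) (2 : Fin 4) x
  have h3 := hasFDerivAt_apply (𝕜 := ℝ) (3 : Fin 4) x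
  have hK : HasFDerivAt (fun y : Fin 4 → ℝ => ((y 2) ^ 2 + (y 3) ^ 2) / 2)
      ((2:ℝ)⁻¹ • ((x 2 • (ContinuousLinearMap.proj 2 : (Fin 4 → ℝ) →L[ℝ] ℝ) +
          x 2 • ContinuousLinearMap.proj 2) +
        (x 3 • (ContinuousLinearMap.proj 3 : (Fin 4 → ℝ) →L[ℝ] ℝ) +
          x 3 • ContinuousLinearMap.proj 3))) x := by
    have h := ((h2.mul h2).add (h3.mul h3)).const_mul (2:ℝ)⁻¹
    have hfun : (fun y : Fin 4 → ℝ => ((y 2) ^ 2 + (y 3) ^ 2) / 2) =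
        fun y : Fin 4 → ℝ => (2:ℝ)⁻¹ * (y 2 * y 2 + y 3 * y 3) := by
      funext y; ring
    rw [hfun]
    exact h
  exact hK.add (hasFDerivAt_VHH a b x)

lemma pd_HHH (a b : ℝ) (x : Fin 4 → ℝ) (k : Fin 4) :
    pd (HHH a b) k x =
      ![a * (x 1) ^ 2 + 3 * b * (x 0) ^ 2, 2 * a * (x 0) * (x 1), x 2, x 3] k := by
  rw [pd, (hasFDerivAt_HHH a b x).fderiv]
  fin_cases k <;> (simp [Pi.single_apply]; ring)

lemma pd_HHH_sq (a b : ℝ) (x : Fin 4 → ℝ) (k : Fin 4) :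
    pd (fun y => (HHH a b y) ^ 2) k x = 2 * HHH a b x * pd (HHH a b) k x := by
  have h := hasFDerivAt_HHH a b x
  have hm : HasFDerivAt (fun y => HHH a b y * HHH a b y) _ x := h.mul h
  have hfun : (fun y => HHH a b y ^ 2) = fun y => HHH a b y * HHH a b y := by
    funext y; ring
  rw [pd, hfun, hm.fderiv, pd, h.fderiv]
  simp
  ring

/-- the vector field `Y = 2HX` is bi-Hamiltonian:
`P̃ dH = 2H·X` and `P d(H²) = 2H·X` on all of ℝ⁴. -/
theorem statement1 (a b : ℝ) :
    ∀ (x : Fin 4 → ℝ) (i : Fin 4),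
      (∑ j, PtHH a b x i j * pd (HHH a b) j x) = 2 * HHH a b x * XHH a b x i ∧
      (∑ j, Pcan i j * pd (fun y => (HHH a b y) ^ 2) j x) = 2 * HHH a b x * XHH a b x i := by
  intro x i
  refine ⟨?_, ?_⟩
  · fin_cases i <;>
      · simp [Fin.sum_univ_four, PtHH, XHH, HHH, VHH, pd_HHH, pd_VHH0, pd_VHH1]
        try ring
  · fin_cases i <;>
      · simp only [pd_HHH_sq]
        simp [Fin.sum_univ_four, Pcan, XHH, HHH, VHH, pd_HHH, pd_VHH0, pd_VHH1]
        try ring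

end
end

section
/- For the Hénon–Heiles system with potential V(q₁,q₂)=q₁(a q₂²+b q₁²), the bivector P̂ with entries P̂^{ij}=H^{2/3}·P̃^{ij} satisfies the Jacobi identity on the open set {x∈ℝ⁴ : H(x)>0}: for all indices i,j,k, Σ_l ( P̂^{li} ∂P̂^{jk}/∂x^l + P̂^{lj} ∂P̂^{ki}/∂x^l + P̂^{lk} ∂P̂^{ij}/∂x^l ) = 0; hence P̂ is a Poisson bivector there. -/
open Real

noncomputable section

/-- The bivector `P̂ = H^{2/3} P̃`. -/
def PhatHH (a b : ℝ) (x : Fin 4 → ℝ) : Matrix (Fin 4) (Fin 4) ℝ :=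
  Matrix.of fun i j => (HHH a b x) ^ ((2 : ℝ) / 3) * PtHH a b x i j

section PDLemmas

variable {f g : (Fin 4 → ℝ) → ℝ} {k : Fin 4} {x : Fin 4 → ℝ}

lemma pd_const (c : ℝ) (k : Fin 4) (x : Fin 4 → ℝ) : pd (fun _ => c) k x = 0 := by
  simp [pd]

lemma pd_coord (i k : Fin 4) (x : Fin 4 → ℝ) :
    pd (fun y => y i) k x = if i = k then 1 else 0 := by
  have h : fderiv ℝ (fun y : Fin 4 → ℝ => y i) x = ContinuousLinearMap.proj i :=
    (ContinuousLinearMap.proj i : (Fin 4 → ℝ) →L[ℝ] ℝ).hasFDerivAt.fderiv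
  simp [pd, h, Pi.single_apply]

lemma pd_add (hf : DifferentiableAt ℝ f x) (hg : DifferentiableAt ℝ g x) :
    pd (fun y => f y + g y) k x = pd f k x + pd g k x := by
  simp [pd, fderiv_fun_add hf hg]

lemma pd_sub (hf : DifferentiableAt ℝ f x) (hg : DifferentiableAt ℝ g x) :
    pd (fun y => f y - g y) k x = pd f k x - pd g k x := by
  simp [pd, fderiv_fun_sub hf hg]

lemma pd_neg : pd (fun y => -(f y)) k x = -(pd f k x) := by
  simp [pd, fderiv_neg]

lemma pd_mul (hf : DifferentiableAt ℝ f x) (hg : DifferentiableAt ℝ g x) :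
    pd (fun y => f y * g y) k x = f x * pd g k x + g x * pd f k x := by
  simp [pd, fderiv_fun_mul hf hg]

lemma pd_div_const (hf : DifferentiableAt ℝ f x) (c : ℝ) :
    pd (fun y => f y / c) k x = pd f k x / c := by
  simp [pd, div_eq_mul_inv, fderiv_mul_const hf, mul_comm]

lemma pd_pow (hf : DifferentiableAt ℝ f x) (n : ℕ) :
    pd (fun y => f y ^ n) k x = n * f x ^ (n - 1) * pd f k x := by
  have h : HasFDerivAt (fun y => f y ^ n) ((n * f x ^ (n - 1)) • fderiv ℝ f x) x :=
    (hasDerivAt_pow n (f x)).comp_hasFDerivAt x hf.hasFDerivAt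
  simp [pd, h.fderiv]

lemma pd_rpow (hf : DifferentiableAt ℝ f x) (h0 : f x ≠ 0) (p : ℝ) :
    pd (fun y => f y ^ p) k x = p * f x ^ (p - 1) * pd f k x := by
  have h : HasFDerivAt (fun y => f y ^ p) ((p * f x ^ (p - 1)) • fderiv ℝ f x) x :=
    hf.hasFDerivAt.rpow_const (Or.inl h0)
  simp [pd, h.fderiv]

end PDLemmas

/-- Explicit partial derivatives of the entries of `P̃`. -/
def dPt (a b : ℝ) (x : Fin 4 → ℝ) : Fin 4 → Fin 4 → Fin 4 → ℝ :=
  let q1 := x 0; let q2 := x 1; let p1 := x 2; let p2 := x 3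
  let z : Fin 4 → ℝ := ![0, 0, 0, 0]
  let d12 : Fin 4 → ℝ := ![-(4 / 3) * p2, (4 / 3) * p1, (4 / 3) * q2, -(4 / 3) * q1]
  let d13 : Fin 4 → ℝ :=
    ![-(2 / 3) * a * q2 ^ 2 + 6 * b * q1 ^ 2, -(4 / 3) * a * q1 * q2, 2 * p1, -2 * p2]
  let d14 : Fin 4 → ℝ := ![(16 / 3) * a * q1 * q2, (8 / 3) * a * q1 ^ 2, 2 * p2, 2 * p1]
  let d23 : Fin 4 → ℝ := ![8 * b * q1 * q2, 4 * a * q2 ^ 2 + 4 * b * q1 ^ 2, 2 * p2, 2 * p1]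
  let d34 : Fin 4 → ℝ :=
    ![4 * a * q2 * p1 - 12 * b * q1 * p2, 4 * a * q1 * p1 - 4 * a * q2 * p2,
      4 * a * q1 * q2, -(2 * a * q2 ^ 2 + 6 * b * q1 ^ 2)]
  ![![z, d12, d13, d14],
    ![-d12, z, d23, -d13],
    ![-d13, -d23, z, d34],
    ![-d14, d13, -d34, z]]

/-- Explicit partial derivatives of `H`. -/
def dH (a b : ℝ) (x : Fin 4 → ℝ) : Fin 4 → ℝ :=
  ![a * (x 1) ^ 2 + 3 * b * (x 0) ^ 2, 2 * a * x 0 * x 1, x 2, x 3]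

set_option maxHeartbeats 4000000

/-- `P̂ = H^{2/3}P̃` satisfies the Jacobi identity on the set `{H > 0}`. -/
theorem statement2 (a b : ℝ) :
    ∀ x : Fin 4 → ℝ, 0 < HHH a b x →
      ∀ i j k : Fin 4, jac (PhatHH a b) i j k x = 0 := by
  intro x hH i j k
  have hne : HHH a b x ≠ 0 := ne_of_gt hH
  have hdH : DifferentiableAt ℝ (HHH a b) x := by
    have h : (HHH a b) =
        fun y => ((y 2) ^ 2 + (y 3) ^ 2) / 2 + y 0 * (a * (y 1) ^ 2 + b * (y 0) ^ 2) := rfl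
    rw [h]; fun_prop
  have hdP : ∀ i j : Fin 4, DifferentiableAt ℝ (fun y => PtHH a b y i j) x := by
    intro i j
    fin_cases i <;> fin_cases j <;>
      simp only [PtHH, Fin.reduceFinMk, Fin.isValue, Matrix.cons_val', Matrix.cons_val_zero,
        Matrix.cons_val_one, Matrix.head_cons, Matrix.empty_val', Matrix.cons_val_fin_one,
        Matrix.head_fin_const, Matrix.of_apply, Matrix.cons_val_two, Matrix.cons_val_three,
        Matrix.tail_cons] <;>
      fun_prop
  have e : HHH a b x ^ ((2:ℝ)/3) = HHH a b x * HHH a b x ^ ((2:ℝ)/3 - 1) := by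
    conv_lhs => rw [show ((2:ℝ)/3) = 1 + ((2:ℝ)/3 - 1) by norm_num]
    rw [Real.rpow_add hH, Real.rpow_one]
  have key : ∀ i j l : Fin 4, pd (fun y => PhatHH a b y i j) l x =
      HHH a b x ^ ((2:ℝ)/3 - 1) * ((2/3) * pd (HHH a b) l x * PtHH a b x i j
        + HHH a b x * pd (fun y => PtHH a b y i j) l x) := by
    intro i j l
    have h1 : pd (fun y => PhatHH a b y i j) l x
        = pd (fun y => (HHH a b y) ^ ((2:ℝ)/3) * PtHH a b y i j) l x := rfl
    rw [h1, pd_mul (hdH.rpow_const (Or.inl hne)) (hdP i j), pd_rpow hdH hne, e]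
    ring
  have pdHv : ∀ l : Fin 4, pd (HHH a b) l x = dH a b x l := by
    have h : pd (HHH a b) =
        pd (fun y => ((y 2) ^ 2 + (y 3) ^ 2) / 2 + y 0 * (a * (y 1) ^ 2 + b * (y 0) ^ 2)) := rfl
    intro l
    fin_cases l <;>
      · rw [h]
        simp (disch := fun_prop) only [pd_add, pd_sub, pd_mul, pd_neg, pd_div_const, pd_pow,
          pd_coord, pd_const]
        simp only [Fin.reduceEq, reduceIte, Fin.reduceFinMk, Fin.isValue, dH,
          Matrix.cons_val_zero, Matrix.cons_val_one, Matrix.head_cons, Matrix.cons_val_two,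
          Matrix.cons_val_three, Matrix.tail_cons]
        push_cast
        ring
  have pdPt : ∀ j k l : Fin 4, pd (fun y => PtHH a b y j k) l x = dPt a b x j k l := by
    intro j k l
    fin_cases j <;> fin_cases k <;> fin_cases l <;>
      · simp only [PtHH, dPt, Fin.reduceFinMk, Fin.isValue, Matrix.cons_val', Matrix.cons_val_zero,
          Matrix.cons_val_one, Matrix.head_cons, Matrix.empty_val', Matrix.cons_val_fin_one,
          Matrix.head_fin_const, Matrix.of_apply, Matrix.cons_val_two, Matrix.cons_val_three,
          Matrix.tail_cons, Pi.neg_apply]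
        try simp (disch := fun_prop) only [pd_add, pd_sub, pd_mul, pd_neg, pd_div_const, pd_pow,
          pd_coord, pd_const]
        try simp only [Fin.reduceEq, reduceIte, pd_const]
        try push_cast
        try ring
  simp only [jac, Fin.sum_univ_four, key, pdHv, pdPt]
  simp only [PhatHH, Matrix.of_apply, e]
  fin_cases i <;> fin_cases j <;> fin_cases k <;>
    · simp only [PtHH, dPt, dH, HHH, VHH, Fin.reduceFinMk, Fin.isValue, Matrix.cons_val',
        Matrix.cons_val_zero, Matrix.cons_val_one, Matrix.head_cons, Matrix.empty_val',
        Matrix.cons_val_fin_one, Matrix.head_fin_const, Matrix.of_apply, Matrix.cons_val_two,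
        Matrix.cons_val_three, Matrix.tail_cons, Pi.neg_apply]
      ring

end
end
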